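/- If T ∈ SL₂(ℤ) is a product of matrices each conjugate in SL₂(ℤ) to R_{1,0} = [[1,1],[0,1]], then there exist matrices S₁, …, S_b, each conjugate in SL₂(ℤ) to R_{1,0}, such that T · S₁ · ⋯ · S_b equals the identity matrix. Equivalently, the submonoid of SL₂(ℤ) generated by the conjugacy class of R_{1,0} is closed under taking inverses. -/

import Mathlib

/-- The matrix `R s t = [[1 - st, s²], [-t², 1 + st]]` in `SL₂(ℤ)`. -/
def R (s t : ℤ) : Matrix.SpecialLinearGroup (Fin 2) ℤ :=
  ⟨!![1 - s * t, s ^ 2; -t ^ 2, 1 + s * t], by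
    simp [Matrix.det_fin_two_of]; ring⟩

lemma R01_conj : IsConj (R 1 0) (R 0 1) := by
  rw [isConj_iff]
  refine ⟨⟨!![0, -1; 1, 0], by simp [Matrix.det_fin_two_of]⟩, ?_⟩
  ext i j
  fin_cases i <;> fin_cases j <;>
    simp [Matrix.SpecialLinearGroup.coe_mul, Matrix.mul_apply, Fin.sum_univ_two, R,
      Matrix.SpecialLinearGroup.SL2_inv_expl] <;> rfl

/-- A list of conjugates of `R 1 0` whose product is the inverse of `R 1 0`. -/
def L0 : List (Matrix.SpecialLinearGroup (Fin 2) ℤ) :=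
  [R 0 1, R 1 0, R 0 1, R 1 0, R 0 1, R 1 0, R 0 1, R 1 0, R 0 1, R 1 0, R 0 1]

lemma L0_mem : ∀ S ∈ L0, IsConj (R 1 0) S := by
  intro S hS
  simp only [L0, List.mem_cons, List.not_mem_nil, or_false] at hS
  rcases hS with h | h | h | h | h | h | h | h | h | h | h <;> subst h <;>
    first | exact R01_conj | exact IsConj.refl _

lemma L0_prod : R 1 0 * L0.prod = 1 := by
  ext i j
  fin_cases i <;> fin_cases j <;>
    simp [L0, R, Matrix.SpecialLinearGroup.coe_mul, Matrix.mul_apply, Fin.sum_univ_two] <;> rfl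

lemma key (A : Matrix.SpecialLinearGroup (Fin 2) ℤ) (h : IsConj (R 1 0) A) :
    ∃ L : List (Matrix.SpecialLinearGroup (Fin 2) ℤ),
      (∀ S ∈ L, IsConj (R 1 0) S) ∧ A * L.prod = 1 := by
  rw [isConj_iff] at h
  obtain ⟨g, hg⟩ := h
  refine ⟨L0.map (fun S => g * S * g⁻¹), ?_, ?_⟩
  · intro S hS
    simp only [List.mem_map] at hS
    obtain ⟨S', hS', rfl⟩ := hS
    exact (L0_mem S' hS').trans (isConj_iff.mpr ⟨g, rfl⟩)
  · have hprod : (L0.map (fun S => g * S * g⁻¹)).prod = g * L0.prod * g⁻¹ := by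
      simpa [MulAut.conj, MulEquiv.toMonoidHom] using List.prod_hom L0 (MulAut.conj g).toMonoidHom
    rw [hprod, ← hg]
    have := L0_prod
    calc g * R 1 0 * g⁻¹ * (g * L0.prod * g⁻¹)
        = g * (R 1 0 * L0.prod) * g⁻¹ := by group
      _ = 1 := by rw [this]; group

/-- If `T ∈ SL₂(ℤ)` is a product of conjugates of `R 1 0 = [[1,1],[0,1]]`, then there are
matrices `S₁, …, S_b`, each conjugate to `R 1 0`, with `T * S₁ * ⋯ * S_b = 1`. -/
theorem stmt_14 (T : Matrix.SpecialLinearGroup (Fin 2) ℤ)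
    (hT : T ∈ Submonoid.closure
      {A : Matrix.SpecialLinearGroup (Fin 2) ℤ | IsConj (R 1 0) A}) :
    ∃ L : List (Matrix.SpecialLinearGroup (Fin 2) ℤ),
      (∀ S ∈ L, IsConj (R 1 0) S) ∧ T * L.prod = 1 := by
  induction hT using Submonoid.closure_induction with
  | mem A hA => exact key A hA
  | one => exact ⟨[], by simp, by simp⟩
  | mul x y _ _ ihx ihy =>
    obtain ⟨Lx, hLx, hx⟩ := ihx
    obtain ⟨Ly, hLy, hy⟩ := ihy
    refine ⟨Ly ++ Lx, ?_, ?_⟩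
    · intro S hS
      rcases List.mem_append.mp hS with h | h
      · exact hLy S h
      · exact hLx S h
    · rw [List.prod_append, ← mul_assoc, mul_assoc x, hy, mul_one, hx]
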